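/- arXiv:1109.4593 — 11 statements merged into one kernel-verified Lean document; each statement's English description precedes it below -/
import Mathlib

section
/- Let α, β be coprime positive integers. Every positive integer n has a unique presentation n = pαβ - aα - bβ with integers p > 0, 0 ≤ a < β and 0 ≤ b < α. -/
/-- Corollary 3.5: every positive integer `n` has a unique presentation
`n = pαβ - aα - bβ` with `p > 0`, `0 ≤ a < β` and `0 ≤ b < α`. -/
theorem unique_presentation (α β : ℕ) (hα : 0 < α) (hβ : 0 < β)
    (hcop : Nat.Coprime α β) (n : ℤ) (hn : 0 < n) :
    ∃! t : ℤ × ℤ × ℤ, 0 < t.1 ∧ 0 ≤ t.2.1 ∧ t.2.1 < β ∧ 0 ≤ t.2.2 ∧ t.2.2 < α ∧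
      n = t.1 * ((α : ℤ) * β) - t.2.1 * α - t.2.2 * β := by
  have hα' : (0:ℤ) < α := by exact_mod_cast hα
  have hβ' : (0:ℤ) < β := by exact_mod_cast hβ
  have hcop' : IsCoprime (α:ℤ) (β:ℤ) := Nat.isCoprime_iff_coprime.mpr hcop
  obtain ⟨u, v, huv⟩ := hcop'
  have hcop' : IsCoprime (α:ℤ) (β:ℤ) := ⟨u, v, huv⟩
  set a : ℤ := (-n * u) % β with ha_def
  set b : ℤ := (-n * v) % α with hb_def
  have ha0 : 0 ≤ a := Int.emod_nonneg _ (ne_of_gt hβ')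
  have haβ : a < β := Int.emod_lt_of_pos _ hβ'
  have hb0 : 0 ≤ b := Int.emod_nonneg _ (ne_of_gt hα')
  have hbα : b < α := Int.emod_lt_of_pos _ hα'
  have h2 : (β:ℤ) ∣ (-n*u) - a := ⟨(-n*u)/β, by rw [ha_def, Int.emod_def]; ring⟩
  have h3 : (α:ℤ) ∣ (-n*v) - b := ⟨(-n*v)/α, by rw [hb_def, Int.emod_def]; ring⟩
  have hdb : (β:ℤ) ∣ n + a * α + b * β := by
    have h1 : (β:ℤ) ∣ n + (-n*u) * α := ⟨n * v, by linear_combination (-n) * huv⟩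
    have heq : n + a*α + b*β = (n + (-n*u)*α) - ((-n*u) - a)*α + b*β := by ring
    rw [heq]
    exact dvd_add (dvd_sub h1 (h2.mul_right α)) (Dvd.intro_left b rfl)
  have hda : (α:ℤ) ∣ n + a * α + b * β := by
    have h1 : (α:ℤ) ∣ n + (-n*v) * β := ⟨n * u, by linear_combination (-n) * huv⟩
    have heq : n + a*α + b*β = (n + (-n*v)*β) - ((-n*v) - b)*β + a*α := by ring
    rw [heq]
    exact dvd_add (dvd_sub h1 (h3.mul_right β)) (Dvd.intro_left a rfl)
  obtain ⟨p, hp⟩ : ((α:ℤ) * β) ∣ n + a * α + b * β := hcop'.mul_dvd hda hdb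
  have hpos : 0 < (α:ℤ) * β * p := by
    rw [← hp]
    have := mul_nonneg ha0 hα'.le
    have := mul_nonneg hb0 hβ'.le
    linarith
  have hppos : 0 < p := by
    by_contra h
    push_neg at h
    have : (α:ℤ) * β * p ≤ 0 :=
      mul_nonpos_of_nonneg_of_nonpos (mul_nonneg hα'.le hβ'.le) h
    linarith
  have hneq : n = p * ((α:ℤ) * β) - a * α - b * β := by linarith [hp]
  refine ⟨⟨p, a, b⟩, ⟨hppos, ha0, haβ, hb0, hbα, hneq⟩, ?_⟩
  rintro ⟨q, c, d⟩ ⟨hq, hc0, hcβ, hd0, hdα, heq⟩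
  simp only at heq hq hc0 hcβ hd0 hdα
  have hβdvd : (β:ℤ) ∣ (c - a) * α :=
    ⟨(q - p) * α - (d - b), by linear_combination heq - hneq⟩
  have hca : (β:ℤ) ∣ c - a := hcop'.symm.dvd_of_dvd_mul_right hβdvd
  have hceq : c = a := by
    have := Int.eq_zero_of_abs_lt_dvd hca (by rw [abs_lt]; constructor <;> linarith)
    linarith
  have hαdvd : (α:ℤ) ∣ (d - b) * β :=
    ⟨(q - p) * β - (c - a), by linear_combination heq - hneq⟩
  have hdb' : (α:ℤ) ∣ d - b := hcop'.dvd_of_dvd_mul_right hαdvd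
  have hdeq : d = b := by
    have := Int.eq_zero_of_abs_lt_dvd hdb' (by rw [abs_lt]; constructor <;> linarith)
    linarith
  have hqp : q = p := by
    have h : q * ((α:ℤ) * β) = p * ((α:ℤ) * β) := by
      rw [hceq, hdeq] at heq; linarith [heq, hneq]
    exact mul_right_cancel₀ (by positivity) h
  simp [hqp, hceq, hdeq]
end

section
/- Let α, β be coprime positive integers, and let r be an integer with 0 < r < β. If x is an integer with 0 < x < rα and x ≡ rα (mod β), then x is a gap of ⟨α, β⟩. -/
/-- Membership in the numerical semigroup ⟨α, β⟩ = ℕ₀α + ℕ₀β, viewed inside ℤ. -/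
def SG (α β : ℕ) : Set ℤ := {e : ℤ | ∃ a b : ℕ, e = (a : ℤ) * α + (b : ℤ) * β}

/-- A gap of ⟨α, β⟩: a positive integer not in the semigroup. -/
def IsGap (α β : ℕ) (e : ℤ) : Prop := 0 < e ∧ e ∉ SG α β

/-- Corollary 3.9: if `0 < r < β`, `0 < x < rα` and `x ≡ rα (mod β)`,
then `x` is a gap of ⟨α, β⟩. -/
theorem gap_of_lt_congruent (α β : ℕ) (hα : 0 < α) (hβ : 0 < β)
    (hcop : Nat.Coprime α β) (r : ℤ) (hr0 : 0 < r) (hrβ : r < β)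
    (x : ℤ) (hx0 : 0 < x) (hxr : x < r * α) (hcong : (β : ℤ) ∣ (r * α - x)) :
    IsGap α β x := by
  refine ⟨hx0, ?_⟩
  rintro ⟨a, b, rfl⟩
  have hd : (β : ℤ) ∣ (r - a) * α := by
    have : (r - a) * α = (r * α - ((a : ℤ) * α + (b : ℤ) * β)) + b * β := by ring
    rw [this]
    exact dvd_add hcong ⟨b, by ring⟩
  have hcop' : IsCoprime (β : ℤ) (α : ℤ) := by
    exact_mod_cast (Nat.isCoprime_iff_coprime.mpr hcop.symm)
  have hd2 : (β : ℤ) ∣ (r - a) := hcop'.dvd_of_dvd_mul_right hd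
  -- a ≥ r, else 0 < r - a < β contradicts divisibility
  have hra : r ≤ (a : ℤ) := by
    by_contra h
    push_neg at h
    have h1 : 0 < r - a := by linarith
    have h2 : r - a < β := by
      have : (0:ℤ) ≤ a := Int.natCast_nonneg a
      linarith
    have := Int.le_of_dvd h1 hd2
    linarith
  have : r * α ≤ (a : ℤ) * α := by
    apply mul_le_mul_of_nonneg_right hra (by exact_mod_cast hα.le)
  have hb : (0:ℤ) ≤ (b : ℤ) * β := by positivity
  linarith
end

section
/- Let α, β be coprime positive integers and let i₁, i₂ be gaps of ⟨α, β⟩ with presentations iₖ = αβ - aₖα - bₖβ where 1 ≤ aₖ < β, 1 ≤ bₖ < α. Then |i₁ - i₂| is a gap of ⟨α, β⟩ if and only if (a₂ - a₁)(b₂ - b₁) < 0. -/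
/-- Definition 3.10: an (α,β)-fundamental couple, given by two integer sequences
`I, J` (indexed by `0, …, m`; values beyond `m` are irrelevant). -/
def IsFundamentalCouple (α β m : ℕ) (I J : ℕ → ℤ) : Prop :=
  -- (0)
  I 0 = 0 ∧
  -- (1)
  (∀ k, 1 ≤ k → k ≤ m → IsGap α β (I k)) ∧
  (∀ k, 1 ≤ k → k < m → IsGap α β (J k)) ∧
  J 0 ≤ (α : ℤ) * β ∧ J m ≤ (α : ℤ) * β ∧
  -- (2)
  (∀ k, k ≤ m → (α : ℤ) ∣ (J k - I k) ∧ I k < J k) ∧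
  (∀ k, k < m → (β : ℤ) ∣ (J k - I (k + 1)) ∧ I (k + 1) < J k) ∧
  ((β : ℤ) ∣ (J m - I 0) ∧ I 0 ≤ J m) ∧
  -- (3)
  (∀ k l, 1 ≤ k → k < l → l ≤ m → IsGap α β |I k - I l|)

/-- Definition 3.22 a): an (α,β)-balanced couple. -/
def IsBalancedCouple (α β m : ℕ) (I J : ℕ → ℤ) : Prop :=
  (∀ k, k ≤ m → (α : ℤ) ∣ (J k - I k) ∧ I k ≤ J k) ∧
  (∀ k, k < m → (β : ℤ) ∣ (J k - I (k + 1)) ∧ I (k + 1) ≤ J k) ∧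
  ((β : ℤ) ∣ (J m - I 0) ∧ I 0 ≤ J m)

/-- Definition 3.22 b): a reduced (α,β)-balanced couple. -/
def IsReducedBalancedCouple (α β m : ℕ) (I J : ℕ → ℤ) : Prop :=
  IsBalancedCouple α β m I J ∧
  (∀ k, k ≤ m → I k < J k) ∧
  (∀ k, k < m → I (k + 1) < J k) ∧
  I 0 < J m ∧
  (∀ k, 1 ≤ k → k ≤ m → min (J (k - 1) - I k) (J k - I k) < (α : ℤ) * β) ∧
  min (J m - I 0) (J 0 - I 0) < (α : ℤ) * β ∧
  (∀ k, k < m → min (J k - I k) (J k - I (k + 1)) < (α : ℤ) * β) ∧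
  min (J m - I m) (J m - I 0) < (α : ℤ) * β

/-- Condition (⋆) for a coefficient sequence `h : ℤ → ℤ`. -/
def StarCondition (α β : ℕ) (h : ℤ → ℤ) : Prop :=
  ∀ (m : ℕ) (I J : ℕ → ℤ), IsFundamentalCouple α β m I J →
    ∀ n : ℤ, ∑ k ∈ Finset.range (m + 1), h (I k + n) ≤
      ∑ k ∈ Finset.range (m + 1), h (J k + n)

lemma SG_comm (α β : ℕ) : SG α β = SG β α := by
  ext e
  constructor <;> rintro ⟨a, b, h⟩ <;> exact ⟨b, a, by linarith⟩

lemma key (α β : ℕ) (hα : 0 < α) (hβ : 0 < β) (hcop : Nat.Coprime α β)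
    (A B : ℤ) (hA : 0 < A) (hA' : A < β) (hB : B < 0) (hB' : -B < α) :
    IsGap α β |A * α + B * β| := by
  have hcop' : IsCoprime (β : ℤ) (α : ℤ) := Nat.isCoprime_iff_coprime.mpr hcop.symm
  have hαZ : (0:ℤ) < α := by exact_mod_cast hα
  have hβZ : (0:ℤ) < β := by exact_mod_cast hβ
  have hd : A * α + B * β ≠ 0 := by
    intro h
    have hdvd : (β:ℤ) ∣ A * α := ⟨-B, by linear_combination h⟩
    have hdA : (β:ℤ) ∣ A := hcop'.dvd_of_dvd_mul_right hdvd
    have := Int.le_of_dvd hA hdA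
    linarith
  refine ⟨abs_pos.mpr hd, ?_⟩
  rintro ⟨x, y, hxy⟩
  have hx : (0:ℤ) ≤ x := Int.natCast_nonneg x
  have hy : (0:ℤ) ≤ y := Int.natCast_nonneg y
  rcases le_or_gt 0 (A * α + B * β) with h0 | h0
  · rw [abs_of_nonneg h0] at hxy
    have h1 : (A - x) * (α:ℤ) = ((y:ℤ) - B) * β := by linear_combination hxy
    have hdvd : (β:ℤ) ∣ (A - x) :=
      hcop'.dvd_of_dvd_mul_right ⟨(y:ℤ) - B, by linear_combination h1⟩
    have hyB : (0:ℤ) < (y:ℤ) - B := by linarith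
    have hAx : (0:ℤ) < A - x := by nlinarith [mul_pos hyB hβZ]
    have := Int.le_of_dvd hAx hdvd
    linarith
  · rw [abs_of_neg h0] at hxy
    have h1 : ((x:ℤ) + A) * (α:ℤ) = (-B - y) * β := by linear_combination -hxy
    have hdvd : (β:ℤ) ∣ ((x:ℤ) + A) :=
      hcop'.dvd_of_dvd_mul_right ⟨-B - y, by linear_combination h1⟩
    have hxA : (0:ℤ) < (x:ℤ) + A := by linarith
    have hle := Int.le_of_dvd hxA hdvd
    nlinarith [mul_le_mul_of_nonneg_right hle (le_of_lt hαZ)]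


/-- Lemma 3.19 a): for gaps `i₁ = αβ - a₁α - b₁β` and `i₂ = αβ - a₂α - b₂β`,
the difference `|i₁ - i₂|` is a gap iff `(a₂ - a₁)(b₂ - b₁) < 0`. -/
theorem diff_gap_iff (α β : ℕ) (hα : 0 < α) (hβ : 0 < β) (hcop : Nat.Coprime α β)
    (i₁ i₂ a₁ b₁ a₂ b₂ : ℤ)
    (ha₁ : 1 ≤ a₁) (ha₁' : a₁ < β) (hb₁ : 1 ≤ b₁) (hb₁' : b₁ < α)
    (ha₂ : 1 ≤ a₂) (ha₂' : a₂ < β) (hb₂ : 1 ≤ b₂) (hb₂' : b₂ < α)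
    (hi₁ : i₁ = (α : ℤ) * β - a₁ * α - b₁ * β)
    (hi₂ : i₂ = (α : ℤ) * β - a₂ * α - b₂ * β)
    (hne : i₁ ≠ i₂) :
    IsGap α β |i₁ - i₂| ↔ (a₂ - a₁) * (b₂ - b₁) < 0 := by
  set A : ℤ := a₂ - a₁ with hAdef
  set B : ℤ := b₂ - b₁ with hBdef
  have hdeq : i₁ - i₂ = A * α + B * β := by rw [hi₁, hi₂]; ring
  have hne0 : A * α + B * β ≠ 0 := by
    rw [← hdeq]; exact sub_ne_zero_of_ne hne
  constructor
  · intro hg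
    by_contra hAB
    push_neg at hAB
    apply hg.2
    rw [hdeq]
    rcases le_or_gt 0 A with hA | hA
    · rcases le_or_gt 0 B with hB | hB
      · refine ⟨A.toNat, B.toNat, ?_⟩
        rw [abs_of_nonneg (by positivity), Int.toNat_of_nonneg hA, Int.toNat_of_nonneg hB]
      · have hA0 : A = 0 := by nlinarith
        refine ⟨0, (-B).toNat, ?_⟩
        rw [Int.toNat_of_nonneg (by linarith)]
        rw [hA0]
        rw [abs_of_nonpos (by nlinarith)]
        push_cast; ring
    · have hB : B ≤ 0 := by nlinarith
      refine ⟨(-A).toNat, (-B).toNat, ?_⟩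
      rw [Int.toNat_of_nonneg (by linarith), Int.toNat_of_nonneg (by linarith)]
      rw [abs_of_nonpos (by nlinarith)]
      ring
  · intro hAB
    rw [hdeq]
    rcases lt_or_ge 0 A with hA | hA
    · have hB : B < 0 := by nlinarith
      exact key α β hα hβ hcop A B hA (by linarith) hB (by linarith)
    · have hA : A < 0 := lt_of_le_of_ne hA (fun h => by rw [h, zero_mul] at hAB; exact absurd hAB (lt_irrefl 0))
      have hB : 0 < B := by nlinarith
      have := key β α hβ hα hcop.symm B A hB (by linarith) hA (by linarith)
      refine ⟨?_, ?_⟩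
      · rw [show A * (α:ℤ) + B * β = B * β + A * α by ring]; exact this.1
      · rw [SG_comm, show A * (α:ℤ) + B * β = B * β + A * α by ring]; exact this.2
end

section
/- Let α, β be coprime positive integers and let e = αβ - aα - bβ be a gap of ⟨α, β⟩ (with 1 ≤ a < β, 1 ≤ b < α). Then the pair of sequences I = (0, e), J = ((β - a)α, (α - b)β) forms an (α, β)-fundamental couple. -/
/-- Remark 3.11: for a gap `e = αβ - aα - bβ`, the couple
`[(0, e), ((β - a)α, (α - b)β)]` is an (α,β)-fundamental couple. -/
theorem fundamental_couple_of_gap (α β : ℕ) (hα : 0 < α) (hβ : 0 < β)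
    (hcop : Nat.Coprime α β) (e a b : ℤ)
    (ha : 1 ≤ a) (ha' : a < β) (hb : 1 ≤ b) (hb' : b < α)
    (he : e = (α : ℤ) * β - a * α - b * β) (hgap : IsGap α β e) :
    IsFundamentalCouple α β 1 (fun k => if k = 0 then 0 else e)
      (fun k => if k = 0 then ((β : ℤ) - a) * α else ((α : ℤ) - b) * β) := by
  have hαz : (0:ℤ) < α := by exact_mod_cast hα
  have hβz : (0:ℤ) < β := by exact_mod_cast hβ
  refine ⟨rfl, ?_, ?_, ?_, ?_, ?_, ?_, ?_, ?_⟩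
  · intro k hk1 hk2
    have hk : k = 1 := by omega
    subst hk
    simpa using hgap
  · intro k hk1 hk2; omega
  · norm_num; nlinarith
  · norm_num; nlinarith
  · intro k hk
    interval_cases k
    · constructor
      · exact ⟨β - a, by norm_num; ring⟩
      · norm_num; nlinarith
    · norm_num
      exact ⟨⟨a, by rw [he]; ring⟩, by nlinarith [he]⟩
  · intro k hk
    have hk0 : k = 0 := by omega
    subst hk0
    constructor
    · exact ⟨b, by norm_num [he]; ring⟩
    · norm_num [he]; nlinarith
  · constructor
    · exact ⟨α - b, by norm_num; ring⟩
    · norm_num; nlinarith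
  · intro k l hk hkl hl; omega
end

section
/- Let α, β be coprime positive integers. Any (α, β)-fundamental couple has length at most α, i.e., if [I, J] is a fundamental couple with I = (i₀, ..., iₘ) then m + 1 ≤ α. -/
lemma gap_not_dvd_alpha (α β : ℕ) (e : ℤ) (hg : IsGap α β e) : ¬ (α : ℤ) ∣ e := by
  rintro ⟨q, rfl⟩
  have hq : 0 < q := by
    by_contra h
    push_neg at h
    have : (α : ℤ) * q ≤ 0 := mul_nonpos_of_nonneg_of_nonpos (by positivity) h
    have := hg.1
    omega
  exact hg.2 ⟨q.toNat, 0, by push_cast [Int.toNat_of_nonneg hq.le]; ring⟩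

/-- Corollary 3.21 b): an (α,β)-fundamental couple has length at most α. -/
theorem fundamental_couple_length_le (α β : ℕ) (hα : 0 < α) (hβ : 0 < β)
    (hcop : Nat.Coprime α β) (m : ℕ) (I J : ℕ → ℤ)
    (hFC : IsFundamentalCouple α β m I J) :
    m + 1 ≤ α := by
  obtain ⟨h0, hIgap, -, -, -, -, -, -, h3⟩ := hFC
  haveI : NeZero α := ⟨hα.ne'⟩
  have key : ∀ k l : ℕ, k < l → l ≤ m → ¬ (α : ℤ) ∣ (I k - I l) := by
    intro k l hkl hlm hdvd
    rcases Nat.eq_zero_or_pos k with rfl | hk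
    · have hg := hIgap l (by omega) hlm
      rw [h0] at hdvd
      exact gap_not_dvd_alpha α β (I l) hg (by rw [zero_sub] at hdvd; exact dvd_neg.mp hdvd)
    · exact gap_not_dvd_alpha α β _ (h3 k l hk hkl hlm) ((dvd_abs _ _).mpr hdvd)
  have hinj : Set.InjOn (fun k : ℕ => ((I k : ZMod α))) (Finset.range (m + 1)) := by
    intro k hk l hl hkl
    simp only [Finset.coe_range, Set.mem_Iio] at hk hl
    by_contra hne
    rcases Nat.lt_or_ge k l with h | h
    · exact key k l h (by omega) (((ZMod.intCast_eq_intCast_iff _ _ _).mp hkl).symm.dvd)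
    · have h' : l < k := by omega
      exact key l k h' (by omega) (((ZMod.intCast_eq_intCast_iff _ _ _).mp hkl).dvd)
  calc m + 1 = (Finset.range (m + 1)).card := by simp
    _ ≤ Fintype.card (ZMod α) := Finset.card_le_card_of_injOn _ (fun _ _ => Finset.mem_univ _) hinj
    _ = α := ZMod.card α
end

section
/- Let α, β be coprime positive integers and [I, J] = [(iₖ)ₖ₌₀^m, (jₖ)ₖ₌₀^m] an (α, β)-fundamental couple. Then i_k ≺ i_{k+1} for k = 1, ..., m-1, where i ≺ i' means a(i) > a(i') and b(i) < b(i') in the gap presentations. -/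
/-- Corollary 3.21 a): in an (α,β)-fundamental couple, `i_k ≺ i_{k+1}` for
`k = 1, …, m-1`, i.e. `a(i_k) > a(i_{k+1})` and `b(i_k) < b(i_{k+1})` in the
gap presentations. -/
theorem fundamental_couple_chain (α β : ℕ) (hα : 0 < α) (hβ : 0 < β)
    (hcop : Nat.Coprime α β) (m : ℕ) (I J : ℕ → ℤ)
    (hFC : IsFundamentalCouple α β m I J) :
    ∀ k, 1 ≤ k → k + 1 ≤ m → ∀ a b a' b' : ℤ,
      (1 ≤ a ∧ a < β ∧ 1 ≤ b ∧ b < α ∧ I k = (α : ℤ) * β - a * α - b * β) →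
      (1 ≤ a' ∧ a' < β ∧ 1 ≤ b' ∧ b' < α ∧ I (k + 1) = (α : ℤ) * β - a' * α - b' * β) →
      a' < a ∧ b < b' := by
  obtain ⟨h0, hIgap, hJgap, hJ0, hJm, h2a, h2b, h2c, h3⟩ := hFC
  intro k hk1 hk1m a b a' b' ⟨ha1, haβ, hb1, hbα, hIk⟩ ⟨ha'1, ha'β, hb'1, hb'α, hIk1⟩
  have hkm : k < m := by omega
  have hαZ : (0 : ℤ) < α := by exact_mod_cast hα
  have hβZ : (0 : ℤ) < β := by exact_mod_cast hβ
  obtain ⟨hdvd1, hlt1⟩ := h2a k (by omega)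
  obtain ⟨hdvd2, hlt2⟩ := h2b k hkm
  obtain ⟨hJpos, hJnot⟩ := hJgap k hk1 hkm
  obtain ⟨s, hs⟩ := hdvd1
  obtain ⟨t, ht⟩ := hdvd2
  have hs1 : 1 ≤ s := by nlinarith
  have ht1 : 1 ≤ t := by nlinarith
  -- a - s ≥ 1, else J k ∈ SG
  have hu1 : 1 ≤ a - s := by
    by_contra h
    push_neg at h
    have hsa : 0 ≤ s - a := by omega
    have hab : 0 ≤ (α : ℤ) - b := by omega
    exact hJnot ⟨(s - a).toNat, ((α : ℤ) - b).toNat, by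
      rw [Int.toNat_of_nonneg hsa, Int.toNat_of_nonneg hab]
      have : J k = I k + (α : ℤ) * s := by linarith
      rw [this, hIk]; ring⟩
  have hv1 : 1 ≤ b' - t := by
    by_contra h
    push_neg at h
    have htb : 0 ≤ t - b' := by omega
    have hba : 0 ≤ (β : ℤ) - a' := by omega
    exact hJnot ⟨((β : ℤ) - a').toNat, (t - b').toNat, by
      rw [Int.toNat_of_nonneg htb, Int.toNat_of_nonneg hba]
      have : J k = I (k + 1) + (β : ℤ) * t := by linarith
      rw [this, hIk1]; ring⟩
  -- two presentations of J k coincide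
  have heq : ((a - s) - a') * (α : ℤ) = ((b' - t) - b) * (β : ℤ) := by
    have h1 : J k = I k + (α : ℤ) * s := by linarith
    have h2 : J k = I (k + 1) + (β : ℤ) * t := by linarith
    rw [hIk] at h1; rw [hIk1] at h2
    linear_combination h1 - h2
  have hcop' : IsCoprime (β : ℤ) (α : ℤ) :=
    Int.isCoprime_iff_gcd_eq_one.mpr (by simpa [Nat.Coprime] using hcop.symm)
  have hdvd : (β : ℤ) ∣ ((a - s) - a') := by
    apply hcop'.dvd_of_dvd_mul_right
    exact ⟨(b' - t) - b, by linarith [heq]⟩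
  have habs : (a - s) - a' = 0 :=
    Int.eq_zero_of_abs_lt_dvd hdvd (abs_lt.mpr ⟨by omega, by omega⟩)
  have hvb : (b' - t) - b = 0 := by
    have : ((b' - t) - b) * (β : ℤ) = 0 := by rw [← heq, habs]; ring
    have := mul_eq_zero.mp this
    rcases this with h | h
    · exact h
    · exfalso; omega
  constructor <;> omega
end

section
/- Let α, β be coprime positive integers and let [I, J] = [(iₖ)ₖ₌₀^m, (jₖ)ₖ₌₀^m] be a reduced (α, β)-balanced couple with nonnegative entries, i₀ = 0 and m ≥ 1. Then at least one of i₁, iₘ is a gap of ⟨α, β⟩. -/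
/-- Key arithmetic lemma: if `x` is a positive multiple of `α` with `x < αβ`,
`x - i` is a positive multiple of `β`, then `i` cannot lie in the semigroup. -/
lemma key_gap (α β : ℕ) (hα : 0 < α) (hβ : 0 < β)
    (hcop : IsCoprime (α : ℤ) (β : ℤ)) (x i : ℤ)
    (hx : (α : ℤ) ∣ x) (hdi : (β : ℤ) ∣ (x - i)) (hlt : i < x)
    (hiSG : ∃ a b : ℕ, i = (a : ℤ) * α + (b : ℤ) * β)
    (hxlt : x < (α : ℤ) * β) : False := by
  obtain ⟨c, hc⟩ := hx
  obtain ⟨d, hd⟩ := hdi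
  obtain ⟨a, b, hab⟩ := hiSG
  have hαZ : (0 : ℤ) < (α : ℤ) := by exact_mod_cast hα
  have hβZ : (0 : ℤ) < (β : ℤ) := by exact_mod_cast hβ
  have hd0 : 0 < d := by nlinarith
  have heq : (c - a) * α = (d + b) * β := by
    have := hab
    nlinarith [hc, hd, hab]
  have hdvd : (β : ℤ) ∣ (c - a) := by
    have h1 : (β : ℤ) ∣ (c - a) * α := ⟨d + b, by linarith [heq]⟩
    exact (hcop.symm.dvd_of_dvd_mul_right h1)
  have hpos : 0 < c - a := by
    have hb0 : (0 : ℤ) ≤ (b : ℤ) := Int.natCast_nonneg b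
    nlinarith
  have hge : (β : ℤ) ≤ c - a := Int.le_of_dvd hpos hdvd
  have ha0 : (0 : ℤ) ≤ (a : ℤ) := Int.natCast_nonneg a
  nlinarith

/-- Lemma 3.24 a): for a reduced (α,β)-balanced couple with nonnegative
elements, `i₀ = 0` and `m ≥ 1`, at least one of `i₁`, `iₘ` is a gap of ⟨α, β⟩. -/
theorem reduced_balanced_gap (α β : ℕ) (hα : 0 < α) (hβ : 0 < β)
    (hcop : Nat.Coprime α β) (m : ℕ) (hm : 1 ≤ m) (I J : ℕ → ℤ)
    (hRB : IsReducedBalancedCouple α β m I J)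
    (hnonneg : ∀ k, k ≤ m → 0 ≤ I k ∧ 0 ≤ J k)
    (hI0 : I 0 = 0) :
    IsGap α β (I 1) ∨ IsGap α β (I m) := by
  by_contra hcon
  push_neg at hcon
  obtain ⟨hg1, hgm⟩ := hcon
  have hcopZ : IsCoprime (α : ℤ) (β : ℤ) := by
    rw [Int.isCoprime_iff_gcd_eq_one]
    exact_mod_cast hcop
  have hSG : ∀ k, k ≤ m → ¬ IsGap α β (I k) → ∃ a b : ℕ, I k = (a : ℤ) * α + (b : ℤ) * β := by
    intro k hk hng
    rcases lt_or_eq_of_le (hnonneg k hk).1 with hpos | h0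
    · rw [IsGap] at hng
      push_neg at hng
      exact hng hpos
    · exact ⟨0, 0, by simp [← h0]⟩
  have hSG1 : ∃ a b : ℕ, I 1 = (a : ℤ) * α + (b : ℤ) * β := hSG 1 hm hg1
  have hSGm : ∃ a b : ℕ, I m = (a : ℤ) * α + (b : ℤ) * β := hSG m le_rfl hgm
  obtain ⟨⟨hA, hB, hC⟩, hlt1, hlt2, hlt3, _, hmin2, _, _⟩ := hRB
  rcases min_lt_iff.mp hmin2 with h | h
  · -- J m - I 0 < αβ : use I m
    refine key_gap β α hβ hα hcopZ.symm (J m) (I m) ?_ ?_ ?_ ?_ ?_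
    · have := hC.1; rw [hI0] at this; simpa using this
    · exact (hA m le_rfl).1
    · exact hlt1 m le_rfl
    · obtain ⟨a, b, hab⟩ := hSGm
      exact ⟨b, a, by linarith [hab]⟩
    · rw [hI0] at h; rw [mul_comm]; linarith
  · -- J 0 - I 0 < αβ : use I 1
    refine key_gap α β hα hβ hcopZ (J 0) (I 1) ?_ ?_ ?_ hSG1 ?_
    · have := (hA 0 (Nat.zero_le m)).1; rw [hI0] at this; simpa using this
    · exact (hB 0 hm).1
    · exact hlt2 0 hm
    · rw [hI0] at h; linarith
end

section
/- Let α, β be coprime positive integers and let [(0, i₁), (j₀, j₁)] be a reduced (α, β)-balanced couple with nonnegative entries. Then it is an (α, β)-fundamental couple; in particular i₁ is a gap of ⟨α, β⟩. -/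
/-- Lemma 3.24 d): any reduced (α,β)-balanced couple `[(0, i₁), (j₀, j₁)]` with
nonnegative entries is fundamental (in particular `i₁` is a gap of ⟨α, β⟩). -/
theorem reduced_balanced_length_two_fundamental (α β : ℕ) (hα : 0 < α) (hβ : 0 < β)
    (hcop : Nat.Coprime α β) (I J : ℕ → ℤ)
    (hRB : IsReducedBalancedCouple α β 1 I J)
    (hnonneg : ∀ k, k ≤ 1 → 0 ≤ I k ∧ 0 ≤ J k)
    (hI0 : I 0 = 0) :
    IsFundamentalCouple α β 1 I J ∧ IsGap α β (I 1) := by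
  obtain ⟨⟨hA, hB, hC⟩, hlt1, hlt2, hlt3, hR1, hR2, hR3, hR4⟩ := hRB
  have hcopZ : IsCoprime (α : ℤ) (β : ℤ) := Int.isCoprime_iff_gcd_eq_one.mpr hcop
  have hαZ : (0:ℤ) < α := by exact_mod_cast hα
  have hβZ : (0:ℤ) < β := by exact_mod_cast hβ
  have dα0 : (α:ℤ) ∣ J 0 := by have := (hA 0 (by norm_num)).1; rwa [hI0, sub_zero] at this
  have dα1 : (α:ℤ) ∣ J 1 - I 1 := (hA 1 le_rfl).1
  have dβ0 : (β:ℤ) ∣ J 0 - I 1 := (hB 0 (by norm_num)).1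
  have dβ1 : (β:ℤ) ∣ J 1 := by have := hC.1; rwa [hI0, sub_zero] at this
  have hi0 : 0 ≤ I 1 := (hnonneg 1 le_rfl).1
  have hij0 : I 1 < J 0 := hlt2 0 (by norm_num)
  have hij1 : I 1 < J 1 := hlt1 1 le_rfl
  have hj0pos : 0 < J 0 := by have := hlt1 0 (by norm_num); omega
  have hj1pos : 0 < J 1 := by have := hlt1 1 le_rfl; omega
  have R2 : min (J 1) (J 0) < (α:ℤ) * β := by
    have := hR2; rw [hI0, sub_zero, sub_zero] at this; exact this
  have R3 : J 0 - I 1 < (α:ℤ) * β := by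
    have h := hR3 0 (by norm_num)
    have e1 : (0:ℕ) + 1 = 1 := rfl
    rw [hI0, sub_zero, e1] at h; omega
  have R4 : J 1 - I 1 < (α:ℤ) * β := by
    have := hR4; rw [hI0, sub_zero] at this
    have h1 : I 1 = I (1:ℕ) := rfl
    omega
  -- I 1 is positive
  have hipos : 0 < I 1 := by
    rcases lt_or_eq_of_le hi0 with h | h
    · exact h
    · exfalso
      have d0 : (α:ℤ) * β ∣ J 0 := hcopZ.mul_dvd dα0 (by rwa [← h, sub_zero] at dβ0)
      have d1 : (α:ℤ) * β ∣ J 1 := hcopZ.mul_dvd (by rwa [← h, sub_zero] at dα1) dβ1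
      have l0 : (α:ℤ) * β ≤ J 0 := Int.le_of_dvd hj0pos d0
      have l1 : (α:ℤ) * β ≤ J 1 := Int.le_of_dvd hj1pos d1
      omega
  -- I 1 is not in the semigroup
  have hnotSG : I 1 ∉ SG α β := by
    rintro ⟨a, b, hab⟩
    have d0 : (α:ℤ) * β ∣ J 0 - a * α := by
      refine hcopZ.mul_dvd (dvd_sub dα0 ⟨a, mul_comm _ _⟩) ?_
      have : J 0 - a * α = (J 0 - I 1) + b * β := by rw [hab]; ring
      rw [this]; exact dvd_add dβ0 ⟨b, mul_comm _ _⟩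
    have d1 : (α:ℤ) * β ∣ J 1 - b * β := by
      refine hcopZ.mul_dvd ?_ (dvd_sub dβ1 ⟨b, mul_comm _ _⟩)
      have : J 1 - b * β = (J 1 - I 1) + a * α := by rw [hab]; ring
      rw [this]; exact dvd_add dα1 ⟨a, mul_comm _ _⟩
    have ha : (0:ℤ) ≤ a * α := mul_nonneg (by positivity) (le_of_lt hαZ)
    have hb : (0:ℤ) ≤ b * β := mul_nonneg (by positivity) (le_of_lt hβZ)
    have p0 : 0 < J 0 - a * α := by
      have : a * α ≤ I 1 := by omega
      omega
    have p1 : 0 < J 1 - b * β := by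
      have : b * β ≤ I 1 := by omega
      omega
    have l0 : (α:ℤ) * β ≤ J 0 - a * α := Int.le_of_dvd p0 d0
    have l1 : (α:ℤ) * β ≤ J 1 - b * β := Int.le_of_dvd p1 d1
    omega
  have hgap : IsGap α β (I 1) := ⟨hipos, hnotSG⟩
  -- J 0 ≤ αβ
  have hJ0le : J 0 ≤ (α:ℤ) * β := by
    by_contra hcon
    push_neg at hcon
    obtain ⟨a, ha⟩ := dα0
    obtain ⟨b, hb⟩ := dβ0
    have haβ : (β:ℤ) ≤ a := by nlinarith
    have hbα : b ≤ (α:ℤ) := by nlinarith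
    refine hnotSG ⟨(a - β).toNat, (α - b).toNat, ?_⟩
    rw [Int.toNat_of_nonneg (by omega), Int.toNat_of_nonneg (by omega)]
    linear_combination ha - hb
  -- J 1 ≤ αβ
  have hJ1le : J 1 ≤ (α:ℤ) * β := by
    by_contra hcon
    push_neg at hcon
    obtain ⟨c, hc⟩ := dβ1
    obtain ⟨d, hd⟩ := dα1
    have hcα : (α:ℤ) ≤ c := by nlinarith
    have hdβ : d ≤ (β:ℤ) := by nlinarith
    refine hnotSG ⟨(β - d).toNat, (c - α).toNat, ?_⟩
    rw [Int.toNat_of_nonneg (by omega), Int.toNat_of_nonneg (by omega)]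
    linear_combination hc - hd
  refine ⟨⟨hI0, ?_, ?_, hJ0le, hJ1le, ?_, ?_, hC, ?_⟩, hgap⟩
  · intro k hk1 hk2
    have : k = 1 := by omega
    rw [this]; exact hgap
  · intro k hk1 hk2; omega
  · intro k hk; exact ⟨(hA k hk).1, hlt1 k hk⟩
  · intro k hk; exact ⟨(hB k hk).1, hlt2 k hk⟩
  · intro k l hk hkl hl; omega
end

section
/- Let H(t) = Σₙ hₙ tⁿ be a nonnegative formal Laurent series over ℤ satisfying condition (⋆): for every (α,β)-fundamental couple [I, J] and every n ∈ ℤ, Σ_{i∈I} h_{i+n} ≤ Σ_{j∈J} h_{j+n}. Then H(t)/(1 - t^β), i.e., the series with coefficients h'ₙ = Σ_{k≥0} h_{n - kβ}, is nonnegative and also satisfies condition (⋆). -/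
/-- Lemma 3.14 c): if a nonnegative Laurent series `H` satisfies condition (⋆),
then so does `H/(1 - t^β)`, whose coefficients are `h'ₙ = Σ_{k≥0} h_{n-kβ}`. -/
theorem star_of_div_one_sub_pow (α β : ℕ) (hα : 0 < α) (hβ : 0 < β)
    (hcop : Nat.Coprime α β) (h : ℤ → ℤ) (hnonneg : ∀ n, 0 ≤ h n)
    (bd : ℤ) (hbd : ∀ n, n < bd → h n = 0) (hstar : StarCondition α β h)
    (h' : ℤ → ℤ)
    (hh' : ∀ n : ℤ, h' n =
      ∑ k ∈ Finset.range ((n - bd).toNat + 1), h (n - (k : ℤ) * β)) :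
    (∀ n, 0 ≤ h' n) ∧ StarCondition α β h' := by
  constructor
  · intro n
    rw [hh']
    exact Finset.sum_nonneg fun k _ => hnonneg _
  · intro m I J hFC n
    set N := Finset.sup (Finset.range (m + 1))
      (fun k => max (I k + n - bd).toNat ((J k + n - bd).toNat)) with hN
    have key : ∀ x : ℤ, (x - bd).toNat ≤ N →
        h' x = ∑ j ∈ Finset.range (N + 1), h (x - (j : ℤ) * β) := by
      intro x hx
      rw [hh']
      apply Finset.sum_subset
      · exact Finset.range_subset_range.2 (by omega)
      · intro j hj hj2
        simp only [Finset.mem_range] at hj hj2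
        apply hbd
        have h1 : x - bd ≤ ((x - bd).toNat : ℤ) := Int.self_le_toNat _
        have h2n : (x - bd).toNat < j := by omega
        have h2 : ((x - bd).toNat : ℤ) < j := by exact_mod_cast h2n
        have h3 : (j : ℤ) ≤ (j : ℤ) * β := by
          nlinarith [Int.natCast_nonneg j, (by exact_mod_cast hβ : (1:ℤ) ≤ β)]
        omega
    have hIN : ∀ k ∈ Finset.range (m + 1),
        h' (I k + n) = ∑ j ∈ Finset.range (N + 1), h (I k + n - (j : ℤ) * β) := by
      intro k hk
      apply key
      have := Finset.le_sup (f := fun k => max (I k + n - bd).toNat ((J k + n - bd).toNat)) hk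
      exact le_trans (le_max_left _ _) this
    have hJN : ∀ k ∈ Finset.range (m + 1),
        h' (J k + n) = ∑ j ∈ Finset.range (N + 1), h (J k + n - (j : ℤ) * β) := by
      intro k hk
      apply key
      have := Finset.le_sup (f := fun k => max (I k + n - bd).toNat ((J k + n - bd).toNat)) hk
      exact le_trans (le_max_right _ _) this
    calc ∑ k ∈ Finset.range (m + 1), h' (I k + n)
        = ∑ k ∈ Finset.range (m + 1), ∑ j ∈ Finset.range (N + 1),
            h (I k + n - (j : ℤ) * β) := Finset.sum_congr rfl hIN
      _ = ∑ j ∈ Finset.range (N + 1), ∑ k ∈ Finset.range (m + 1),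
            h (I k + n - (j : ℤ) * β) := Finset.sum_comm
      _ ≤ ∑ j ∈ Finset.range (N + 1), ∑ k ∈ Finset.range (m + 1),
            h (J k + n - (j : ℤ) * β) := by
            apply Finset.sum_le_sum
            intro j _
            have := hstar m I J hFC (n - (j : ℤ) * β)
            simpa only [← add_sub_assoc] using this
      _ = ∑ k ∈ Finset.range (m + 1), ∑ j ∈ Finset.range (N + 1),
            h (J k + n - (j : ℤ) * β) := Finset.sum_comm
      _ = ∑ k ∈ Finset.range (m + 1), h' (J k + n) :=
            (Finset.sum_congr rfl hJN).symm
end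

section
/- Let α, β be coprime positive integers and H(t) = Σ_{n≥0} hₙ tⁿ a nonnegative series satisfying condition (⋆) with h₀ > 0. Then at least one of cα := min{h_{rα} : 0 < r < β} and cβ := min{h_{sβ} : 0 < s < α} is positive. -/
lemma gap_of (α β : ℕ) (hα : 0 < α) (hβ : 0 < β) (hcop : Nat.Coprime α β)
    (r s : ℕ) (hr0 : 0 < r) (hrβ : r < β) (hs0 : 0 < s) (hsα : s < α)
    (hpos : 0 < (r : ℤ) * α + (s : ℤ) * β - (α : ℤ) * β) :
    IsGap α β ((r : ℤ) * α + (s : ℤ) * β - (α : ℤ) * β) := by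
  refine ⟨hpos, ?_⟩
  rintro ⟨a, b, hab⟩
  have hco : IsCoprime (β : ℤ) (α : ℤ) := (Nat.isCoprime_iff_coprime.mpr hcop).symm
  have key : ((r : ℤ) - a) * α = ((α : ℤ) - s + b) * β := by linear_combination hab
  have hdvd : (β : ℤ) ∣ ((r : ℤ) - a) :=
    hco.dvd_of_dvd_mul_right ⟨(α : ℤ) - s + b, by linear_combination key⟩
  have hsα' : (s : ℤ) < α := by exact_mod_cast hsα
  have hb : (0 : ℤ) ≤ b := Int.ofNat_nonneg b
  have hβ' : (0 : ℤ) < β := by exact_mod_cast hβ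
  have hα' : (0 : ℤ) < α := by exact_mod_cast hα
  have hrhs : 0 < ((α : ℤ) - s + b) * β := by
    apply mul_pos _ hβ'
    linarith
  have h1 : 0 < (r : ℤ) - a := by nlinarith
  have := Int.le_of_dvd h1 hdvd
  omega

lemma couple_of (α β : ℕ) (hα : 0 < α) (hβ : 0 < β) (hcop : Nat.Coprime α β)
    (r s : ℕ) (hr0 : 0 < r) (hrβ : r < β) (hs0 : 0 < s) (hsα : s < α)
    (hpos : 0 < (r : ℤ) * α + (s : ℤ) * β - (α : ℤ) * β) :
    IsFundamentalCouple α β 1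
      (fun k => (k : ℤ) * ((r : ℤ) * α + (s : ℤ) * β - (α : ℤ) * β))
      (fun k => (r : ℤ) * α + (k : ℤ) * ((s : ℤ) * β - (r : ℤ) * α)) := by
  have hr' : (r : ℤ) < β := by exact_mod_cast hrβ
  have hs' : (s : ℤ) < α := by exact_mod_cast hsα
  have hr0' : (0 : ℤ) < r := by exact_mod_cast hr0
  have hs0' : (0 : ℤ) < s := by exact_mod_cast hs0
  have hβ' : (0 : ℤ) < β := by exact_mod_cast hβ
  have hα' : (0 : ℤ) < α := by exact_mod_cast hα
  refine ⟨by simp, ?_, ?_, ?_, ?_, ?_, ?_, ?_, ?_⟩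
  · intro k h1 h2
    interval_cases k
    simpa using gap_of α β hα hβ hcop r s hr0 hrβ hs0 hsα hpos
  · intro k h1 h2; omega
  · simp only [Nat.cast_zero]; nlinarith
  · simp only [Nat.cast_one]; nlinarith
  · intro k hk
    interval_cases k
    · exact ⟨⟨r, by push_cast; ring⟩, by push_cast; nlinarith⟩
    · exact ⟨⟨(β : ℤ) - r, by push_cast; ring⟩, by push_cast; nlinarith⟩
  · intro k hk
    interval_cases k
    exact ⟨⟨(α : ℤ) - s, by push_cast; ring⟩, by push_cast; nlinarith⟩
  · exact ⟨⟨s, by push_cast; ring⟩, by push_cast; nlinarith⟩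
  · intro k l h1 h2 h3; omega

/-- Proposition 3.17: if a nonnegative series `Σ_{n≥0} hₙtⁿ` satisfies (⋆) and
`h₀ > 0`, then `c_α = min{h_{rα} : 0 < r < β}` or `c_β = min{h_{sβ} : 0 < s < α}`
is positive. -/
theorem pos_min_on_multiples (α β : ℕ) (hα : 0 < α) (hβ : 0 < β)
    (hcop : Nat.Coprime α β) (h : ℤ → ℤ) (hnonneg : ∀ n, 0 ≤ h n)
    (hneg : ∀ n : ℤ, n < 0 → h n = 0) (hstar : StarCondition α β h)
    (h0 : 0 < h 0) :
    (∀ r : ℕ, 0 < r → r < β → 0 < h ((r : ℤ) * α)) ∨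
      (∀ s : ℕ, 0 < s → s < α → 0 < h ((s : ℤ) * β)) := by
  by_contra hc
  push_neg at hc
  obtain ⟨⟨r, hr0, hrβ, hr⟩, ⟨s, hs0, hsα, hs⟩⟩ := hc
  have hr : h ((r : ℤ) * α) = 0 := le_antisymm hr (hnonneg _)
  have hs : h ((s : ℤ) * β) = 0 := le_antisymm hs (hnonneg _)
  have hα2 : (0 : ℤ) < α := by exact_mod_cast hα
  have hβ2 : (0 : ℤ) < β := by exact_mod_cast hβ
  have hene : (r : ℤ) * α + (s : ℤ) * β - (α : ℤ) * β ≠ 0 := by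
    intro h0e
    have hco : IsCoprime (α : ℤ) (β : ℤ) := Nat.isCoprime_iff_coprime.mpr hcop
    have hdvd : (α : ℤ) ∣ (s : ℤ) :=
      hco.dvd_of_dvd_mul_right ⟨(β : ℤ) - r, by linear_combination h0e⟩
    have hs0x : (0 : ℤ) < s := by exact_mod_cast hs0
    have := Int.le_of_dvd hs0x hdvd
    omega
  rcases lt_or_gt_of_ne hene with hlt | hgt
  · -- rα + sβ < αβ : use (β-r, α-s), shift n = rα + sβ - αβ
    have hrle : ((β - r : ℕ) : ℤ) = (β : ℤ) - r := by
      push_cast [Nat.cast_sub hrβ.le]; ring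
    have hsle : ((α - s : ℕ) : ℤ) = (α : ℤ) - s := by
      push_cast [Nat.cast_sub hsα.le]; ring
    have fc := couple_of α β hα hβ hcop (β - r) (α - s) (by omega) (by omega)
      (by omega) (by omega) (by rw [hrle, hsle]; linarith)
    have key := hstar 1 _ _ fc ((r : ℤ) * α + (s : ℤ) * β - (α : ℤ) * β)
    simp only [Finset.sum_range_succ, Finset.sum_range_zero, Nat.cast_zero,
      Nat.cast_one, zero_mul, zero_add, one_mul, add_zero, hrle, hsle] at key
    have e1 : (((β : ℤ) - r) * α + ((α : ℤ) - s) * β - (α : ℤ) * β) +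
        ((r : ℤ) * α + (s : ℤ) * β - (α : ℤ) * β) = 0 := by ring
    have e2 : ((β : ℤ) - r) * α + ((r : ℤ) * α + (s : ℤ) * β - (α : ℤ) * β)
        = (s : ℤ) * β := by ring
    have e3 : ((β : ℤ) - r) * α + (((α : ℤ) - s) * β - ((β : ℤ) - r) * α) +
        ((r : ℤ) * α + (s : ℤ) * β - (α : ℤ) * β) = (r : ℤ) * α := by ring
    rw [e1, e2, e3] at key
    have := hnonneg ((r : ℤ) * α + (s : ℤ) * β - (α : ℤ) * β)
    omega
  · -- αβ < rα + sβ : direct couple, shift 0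
    have fc := couple_of α β hα hβ hcop r s hr0 hrβ hs0 hsα hgt
    have key := hstar 1 _ _ fc 0
    simp only [Finset.sum_range_succ, Finset.sum_range_zero, Nat.cast_zero,
      Nat.cast_one, zero_mul, zero_add, one_mul, add_zero] at key
    have e3 : (r : ℤ) * α + ((s : ℤ) * β - (r : ℤ) * α) = (s : ℤ) * β := by ring
    rw [e3] at key
    have := hnonneg ((r : ℤ) * α + (s : ℤ) * β - (α : ℤ) * β)
    omega
end

section
/- Let R = 𝔽[X,Y] with deg X = 3, deg Y = 5 over a field 𝔽, and let M = R ⊕ (R/𝔪)(-1) ⊕ (R/𝔪)(-2), where 𝔪 = (X, Y). Then every finitely generated graded R-module N with the same Hilbert series as M satisfies depth(N) = 0, although (1 - t¹⁵)·H_M(t) is nonnegative. -/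
open MvPolynomial

/-- The Hilbert function of `M = R ⊕ (R/𝔪)(-1) ⊕ (R/𝔪)(-2)` for
`R = 𝔽[X,Y]`, `deg X = 3`, `deg Y = 5`: in degree `j` it is
`#{(a,b) ∈ ℕ² : 3a + 5b = j} + [j = 1] + [j = 2]`. -/
def hilbM (j : ℕ) : ℕ :=
  ((Finset.range (j + 1) ×ˢ Finset.range (j + 1)).filter
      (fun p => 3 * p.1 + 5 * p.2 = j)).card +
    (if j = 1 then 1 else 0) + (if j = 2 then 1 else 0)

/-- The nonnegativity of `(1 - t¹⁵)·H_M(t)`, i.e. monotonicity of the Hilbert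
function along steps of size `15`. -/
lemma hilbM_le_hilbM_add_fifteen : ∀ j : ℕ, hilbM j ≤ hilbM (j + 15) := by
  intro j
  rcases Nat.lt_or_ge j 3 with h | h
  · interval_cases j <;> decide
  · unfold hilbM
    rw [if_neg (by omega : ¬ j = 1), if_neg (by omega : ¬ j = 2),
        if_neg (by omega : ¬ j + 15 = 1), if_neg (by omega : ¬ j + 15 = 2)]
    simp only [add_zero]
    apply Finset.card_le_card_of_injOn (fun p => (p.1 + 5, p.2))
    · rintro ⟨a, b⟩ hp
      simp only [Finset.mem_coe, Finset.mem_filter, Finset.mem_product, Finset.mem_range] at hp ⊢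
      omega
    · rintro ⟨a, b⟩ _ ⟨c, d⟩ _ hcd
      simp only [Prod.mk.injEq] at hcd ⊢
      omega

/-- Example 3.1: over `R = 𝔽[X,Y]` with `deg X = 3`, `deg Y = 5`, every finitely
generated graded `R`-module `N` with the same Hilbert series as
`M = R ⊕ (R/𝔪)(-1) ⊕ (R/𝔪)(-2)` has depth 0 (i.e. every element of the maximal
graded ideal `𝔪 = (X, Y)` is a zerodivisor on `N`), although
`(1 - t¹⁵)·H_M(t)` is nonnegative. -/
theorem depth_zero_example (F : Type*) [Field F]
    (N : Type*) [AddCommGroup N] [Module (MvPolynomial (Fin 2) F) N]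
    [Module F N] [IsScalarTower F (MvPolynomial (Fin 2) F) N]
    [Module.Finite (MvPolynomial (Fin 2) F) N]
    (𝒩 : ℕ → Submodule F N)
    (hdecomp : DirectSum.IsInternal 𝒩)
    (hgraded : ∀ i j : ℕ, ∀ r ∈ weightedHomogeneousSubmodule F ![3, 5] i,
      ∀ x ∈ 𝒩 j, r • x ∈ 𝒩 (i + j))
    (hhilb : ∀ j : ℕ, Module.finrank F (𝒩 j) = hilbM j) :
    (∀ z ∈ Ideal.span ({X 0, X 1} : Set (MvPolynomial (Fin 2) F)), ∃ v : N, v ≠ 0 ∧ z • v = 0) ∧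
      (∀ j : ℕ, hilbM j ≤ hilbM (j + 15)) := by
  classical
  refine ⟨?_, hilbM_le_hilbM_add_fifteen⟩
  set e : DirectSum ℕ (fun i => 𝒩 i) ≃ₗ[F] N :=
    LinearEquiv.ofBijective (DirectSum.coeLinearMap 𝒩) hdecomp with he
  set π : ℕ → N →ₗ[F] N := fun j =>
    (𝒩 j).subtype ∘ₗ (DirectSum.component F ℕ (fun i => 𝒩 i) j) ∘ₗ e.symm.toLinearMap
    with hπ
  have hπ_apply : ∀ j x, π j x = ((e.symm x) j : N) := fun _ _ => rfl
  have hπ_self : ∀ j x, x ∈ 𝒩 j → π j x = x := by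
    intro j x hx
    rw [hπ_apply, hdecomp.ofBijective_coeLinearMap_of_mem hx]
  have hπ_ne : ∀ j d x, x ∈ 𝒩 d → d ≠ j → π j x = 0 := by
    intro j d x hx hd
    rw [hπ_apply, hdecomp.ofBijective_coeLinearMap_of_mem_ne hd hx, Submodule.coe_zero]
  -- decomposition of an arbitrary element into homogeneous components
  have hdec : ∀ x : N, x = ∑ d ∈ (e.symm x).support, ((e.symm x) d : N) := by
    intro x
    conv_lhs => rw [← e.apply_symm_apply x, ← DirectSum.sum_support_of (e.symm x)]
    rw [he, map_sum]
    exact Finset.sum_congr rfl fun d _ => DirectSum.coeLinearMap_of 𝒩 d _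
  -- a homogeneous polynomial of weight `> j` maps everything into degrees `> j`
  have hkill : ∀ (wdeg j : ℕ) (p : MvPolynomial (Fin 2) F),
      p ∈ weightedHomogeneousSubmodule F ![3, 5] wdeg →
      ∀ x : N, j < wdeg → π j (p • x) = 0 := by
    intro wdeg j p hp x hj
    conv_lhs => rw [hdec x]
    rw [Finset.smul_sum, map_sum]
    refine Finset.sum_eq_zero fun d _ => ?_
    exact hπ_ne j (wdeg + d) _ (hgraded wdeg d p hp _ ((e.symm x) d).2) (by omega)
  -- weight computation for monomials
  have hwt : ∀ μ : Fin 2 →₀ ℕ, (Finsupp.weight ![3, 5] μ : ℕ) = 3 * μ 0 + 5 * μ 1 := by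
    intro μ
    rw [Finsupp.weight_apply, Finsupp.sum_fintype]
    · simp [Fin.sum_univ_two, mul_comm]
    · intro i
      exact zero_smul ℕ _
  have hmono : ∀ μ : Fin 2 →₀ ℕ,
      (monomial μ (1 : F)) = X 0 ^ μ 0 * X 1 ^ μ 1 := by
    intro μ
    have hμ : μ = Finsupp.single 0 (μ 0) + Finsupp.single 1 (μ 1) := by
      ext i
      fin_cases i <;> simp [Finsupp.single_apply]
    rw [X_pow_eq_monomial, X_pow_eq_monomial, monomial_mul, mul_one, ← hμ]
  -- every graded piece is finite dimensional
  obtain ⟨S, hS⟩ := ‹Module.Finite (MvPolynomial (Fin 2) F) N›.fg_top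
  have hfd : ∀ j, FiniteDimensional F (𝒩 j) := by
    intro j
    set T : Finset N := (S ×ˢ (Finset.range (j + 1) ×ˢ Finset.range (j + 1))).image
      (fun q => π j ((X 0 ^ q.2.1 * X 1 ^ q.2.2 : MvPolynomial (Fin 2) F) • q.1)) with hT
    have hle : 𝒩 j ≤ Submodule.span F (T : Set N) := by
      intro x hx
      have hxtop : x ∈ Submodule.span (MvPolynomial (Fin 2) F) (S : Set N) := by
        rw [hS]; trivial
      obtain ⟨f, -, hf⟩ := Submodule.mem_span_finset.mp hxtop
      have hx2 : x = ∑ n ∈ S, π j (f n • n) := by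
        conv_lhs => rw [← hπ_self j x hx, ← hf]
        rw [map_sum]
      rw [hx2]
      refine Submodule.sum_mem _ fun n hn => ?_
      have hfn : f n • n =
          ∑ μ ∈ (f n).support, (coeff μ (f n)) • ((monomial μ (1 : F)) • n) := by
        conv_lhs => rw [as_sum (f n)]
        rw [Finset.sum_smul]
        refine Finset.sum_congr rfl fun μ _ => ?_
        rw [show (monomial μ (coeff μ (f n))) = (coeff μ (f n)) • monomial μ (1 : F) by
              rw [smul_monomial, smul_eq_mul, mul_one],
            smul_assoc]
      rw [hfn, map_sum]
      refine Submodule.sum_mem _ fun μ _ => ?_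
      rw [map_smul]
      refine Submodule.smul_mem _ _ ?_
      by_cases hμ : 3 * μ 0 + 5 * μ 1 ≤ j
      · apply Submodule.subset_span
        rw [hmono μ]
        simp only [hT, Finset.coe_image, Set.mem_image, Finset.mem_coe]
        refine ⟨(n, μ 0, μ 1), ?_, rfl⟩
        simp only [Finset.mem_product, Finset.mem_range]
        exact ⟨hn, by omega, by omega⟩
      · rw [hkill (3 * μ 0 + 5 * μ 1) j _
            (isWeightedHomogeneous_monomial ![3, 5] μ 1 (hwt μ)) n (by omega)]
        exact Submodule.zero_mem _
    haveI : FiniteDimensional F (Submodule.span F (T : Set N)) :=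
      FiniteDimensional.span_finset F T
    exact Submodule.finiteDimensional_of_le hle
  -- dimensions of the relevant pieces
  have h4 : 𝒩 4 = ⊥ := by
    haveI := hfd 4
    exact Submodule.finrank_eq_zero.mp (by rw [hhilb]; decide)
  have h7 : 𝒩 7 = ⊥ := by
    haveI := hfd 7
    exact Submodule.finrank_eq_zero.mp (by rw [hhilb]; decide)
  have hnz : ∀ j, hilbM j = 1 → ∃ x : N, x ∈ 𝒩 j ∧ x ≠ 0 := by
    intro j hj
    haveI := hfd j
    have : Nontrivial (𝒩 j) := by
      apply Module.nontrivial_of_finrank_pos (R := F)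
      rw [hhilb, hj]
      norm_num
    obtain ⟨x, hx⟩ := exists_ne (0 : 𝒩 j)
    exact ⟨x, x.2, by simpa using hx⟩
  -- homogeneous multiplication by the variables
  have hX0mem : (X 0 : MvPolynomial (Fin 2) F) ∈ weightedHomogeneousSubmodule F ![3, 5] 3 := by
    rw [mem_weightedHomogeneousSubmodule]
    simpa using isWeightedHomogeneous_X F ![3, 5] 0
  have hX1mem : (X 1 : MvPolynomial (Fin 2) F) ∈ weightedHomogeneousSubmodule F ![3, 5] 5 := by
    rw [mem_weightedHomogeneousSubmodule]
    simpa using isWeightedHomogeneous_X F ![3, 5] 1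
  have hX0 : ∀ d (x : N), x ∈ 𝒩 d → (X 0 : MvPolynomial (Fin 2) F) • x ∈ 𝒩 (3 + d) :=
    fun d x hx => hgraded 3 d _ hX0mem x hx
  have hX1 : ∀ d (x : N), x ∈ 𝒩 d → (X 1 : MvPolynomial (Fin 2) F) • x ∈ 𝒩 (5 + d) :=
    fun d x hx => hgraded 5 d _ hX1mem x hx
  have hcomm : ∀ (p q : MvPolynomial (Fin 2) F) (x : N), p • q • x = q • p • x := by
    intro p q x
    rw [← mul_smul, mul_comm, mul_smul]
  obtain ⟨v, hv1, hv0⟩ := hnz 1 (by decide)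
  obtain ⟨w, hw2, hw0⟩ := hnz 2 (by decide)
  have hX0v : (X 0 : MvPolynomial (Fin 2) F) • v = 0 := by
    have := hX0 1 v hv1
    rw [show (3 + 1 : ℕ) = 4 from rfl, h4] at this
    simpa using this
  have hX1w : (X 1 : MvPolynomial (Fin 2) F) • w = 0 := by
    have := hX1 2 w hw2
    rw [show (5 + 2 : ℕ) = 7 from rfl, h7] at this
    simpa using this
  -- main case analysis: produce a socle element `t`
  have main : ∃ t : N, t ≠ 0 ∧ (X 0 : MvPolynomial (Fin 2) F) • t = 0 ∧
      (X 1 : MvPolynomial (Fin 2) F) • t = 0 := by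
    by_cases hv1z : (X 1 : MvPolynomial (Fin 2) F) • v = 0
    · exact ⟨v, hv0, hX0v, hv1z⟩
    by_cases hw0z : (X 0 : MvPolynomial (Fin 2) F) • w = 0
    · exact ⟨w, hw0, hw0z, hX1w⟩
    set u : N := (X 1 : MvPolynomial (Fin 2) F) • v with hu
    have hu6 : u ∈ 𝒩 6 := hX1 1 v hv1
    have hX0u : (X 0 : MvPolynomial (Fin 2) F) • u = 0 := by
      rw [hu, hcomm, hX0v, smul_zero]
    set u2 : N := (X 1 : MvPolynomial (Fin 2) F) • u with hu2
    have hu2mem : u2 ∈ 𝒩 11 := hX1 6 u hu6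
    have hX0u2 : (X 0 : MvPolynomial (Fin 2) F) • u2 = 0 := by
      rw [hu2, hcomm, hX0u, smul_zero]
    by_cases hu2z : u2 = 0
    · exact ⟨u, hv1z, hX0u, hu2z⟩
    set s1 : N := (X 0 : MvPolynomial (Fin 2) F) • w with hs1
    have hs1mem : s1 ∈ 𝒩 5 := hX0 2 w hw2
    have hX1s1 : (X 1 : MvPolynomial (Fin 2) F) • s1 = 0 := by
      rw [hs1, hcomm, hX1w, smul_zero]
    set s2 : N := (X 0 : MvPolynomial (Fin 2) F) • s1 with hs2
    have hs2mem : s2 ∈ 𝒩 8 := hX0 5 s1 hs1mem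
    have hX1s2 : (X 1 : MvPolynomial (Fin 2) F) • s2 = 0 := by
      rw [hs2, hcomm, hX1s1, smul_zero]
    by_cases hs2z : s2 = 0
    · exact ⟨s1, hw0z, hs2z, hX1s1⟩
    set s3 : N := (X 0 : MvPolynomial (Fin 2) F) • s2 with hs3
    have hs3mem : s3 ∈ 𝒩 11 := hX0 8 s2 hs2mem
    have hX1s3 : (X 1 : MvPolynomial (Fin 2) F) • s3 = 0 := by
      rw [hs3, hcomm, hX1s2, smul_zero]
    by_cases hs3z : s3 = 0
    · exact ⟨s2, hs2z, hs3z, hX1s2⟩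
    -- both `u2` and `s3` are nonzero elements of the one-dimensional `𝒩 11`
    haveI := hfd 11
    have hdim : Module.finrank F (𝒩 11) = 1 := by rw [hhilb]; decide
    obtain ⟨c, hc⟩ := (finrank_eq_one_iff_of_nonzero' (⟨s3, hs3mem⟩ : 𝒩 11)
      (by simpa using hs3z)).mp hdim ⟨u2, hu2mem⟩
    have hc' : c • s3 = u2 := congrArg Subtype.val hc
    have hcne : c ≠ 0 := by
      rintro rfl
      rw [zero_smul] at hc'
      exact hu2z hc'.symm
    have hzero : c • ((X 0 : MvPolynomial (Fin 2) F) • s3) = 0 := by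
      have h1 : (X 0 : MvPolynomial (Fin 2) F) • (c • s3) = 0 := by
        rw [hc']; exact hX0u2
      rw [← h1, ← algebraMap_smul (MvPolynomial (Fin 2) F) c s3,
        ← algebraMap_smul (MvPolynomial (Fin 2) F) c ((X 0 : MvPolynomial (Fin 2) F) • s3),
        hcomm]
    have hX0s3 : (X 0 : MvPolynomial (Fin 2) F) • s3 = 0 := by
      rcases smul_eq_zero.mp hzero with h | h
      · exact absurd h hcne
      · exact h
    exact ⟨s3, hs3z, hX0s3, hX1s3⟩
  obtain ⟨t, ht0, htx, hty⟩ := main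
  intro z hz
  obtain ⟨a, b, hab⟩ := Ideal.mem_span_pair.mp hz
  refine ⟨t, ht0, ?_⟩
  rw [← hab, add_smul, mul_smul, mul_smul, htx, hty, smul_zero, smul_zero, add_zero]
end
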